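/- Let E : A → P be a conditional expectation of finite index on an inclusion of unital C*-algebras, and suppose E has the Rohlin property with Rohlin projection e ∈ A_∞. Then the dual conditional expectation Ê : C*⟨A, e_P⟩ → A is approximately representable with the same projection e; in particular e z e = Ê(z) e for all z in the basic construction. -/

import Mathlib

/-- A finite-index inclusion `P ⊆ A` of unital C*-algebras together with its
C*-basic construction, all realized inside one ambient C*-algebra `B = C*⟨A, e_P⟩`:
`E : A → P` is a conditional expectation of finite Watatani index `ind`
(a central, positive, invertible element, with inverse `indInv`), `eP` is the Jones
projection (`e_P a e_P = E(a) e_P`, `B` is the linear span of `A e_P A`), and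
`Ehat` is the (faithful) dual conditional expectation `Ê : B → A`,
`Ê(x e_P y) = (Index E)⁻¹ x y`. -/
structure WatataniSetup (B : Type*) [NormedRing B] [StarRing B] [CStarRing B]
    [NormedAlgebra ℂ B] [CompleteSpace B] [StarModule ℂ B] [PartialOrder B]
    [StarOrderedRing B] where
  A : StarSubalgebra ℂ B
  P : StarSubalgebra ℂ B
  le : P ≤ A
  E : B → B
  eP : B
  Ehat : B → B
  ind : B
  indInv : B
  ind_mem : ind ∈ P
  ind_central : ∀ b : B, Commute ind b
  ind_pos : 0 ≤ ind
  ind_mul_inv : ind * indInv = 1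
  inv_mul_ind : indInv * ind = 1
  -- `E` is a conditional expectation from `A` onto `P`
  E_add : ∀ x y : B, E (x + y) = E x + E y
  E_smul : ∀ (c : ℂ) (x : B), E (c • x) = c • E x
  E_mem : ∀ x ∈ A, E x ∈ P
  E_fix : ∀ x ∈ P, E x = x
  E_bimod : ∀ p ∈ P, ∀ q ∈ P, ∀ x : B, E (p * x * q) = p * E x * q
  E_star : ∀ x : B, E (star x) = star (E x)
  E_pos : ∀ x : B, 0 ≤ E (star x * x)
  E_faithful : ∀ x ∈ A, E (star x * x) = 0 → x = 0
  -- the Jones projection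
  eP_idem : eP * eP = eP
  eP_star : star eP = eP
  eP_conj : ∀ a ∈ A, eP * a * eP = E a * eP
  eP_comm : ∀ p ∈ P, Commute eP p
  eP_inj : ∀ p ∈ P, p * eP = 0 → p = 0
  -- `B` is the basic construction: the linear span of `A e_P A`
  span : ∀ z : B, ∃ (n : ℕ) (x y : Fin n → B),
    (∀ i, x i ∈ A) ∧ (∀ i, y i ∈ A) ∧ z = ∑ i, x i * eP * y i
  -- the dual conditional expectation `Ê : B → A`
  Ehat_add : ∀ x y : B, Ehat (x + y) = Ehat x + Ehat y
  Ehat_smul : ∀ (c : ℂ) (x : B), Ehat (c • x) = c • Ehat x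
  Ehat_mem : ∀ x : B, Ehat x ∈ A
  Ehat_fix : ∀ x ∈ A, Ehat x = x
  Ehat_bimod : ∀ p ∈ A, ∀ q ∈ A, ∀ x : B, Ehat (p * x * q) = p * Ehat x * q
  Ehat_star : ∀ x : B, Ehat (star x) = star (Ehat x)
  Ehat_pos : ∀ x : B, 0 ≤ Ehat (star x * x)
  Ehat_faithful : ∀ x : B, Ehat (star x * x) = 0 → x = 0
  Ehat_eP : ∀ x ∈ A, ∀ y ∈ A, Ehat (x * eP * y) = indInv * (x * y)


/-- A sequence `(a n)` in a normed space is bounded. -/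
def IsBddSeq {A : Type*} [Norm A] (a : ℕ → A) : Prop := ∃ C : ℝ, ∀ n, ‖a n‖ ≤ C

/-- Data exhibiting the algebra `Ainf` as the quotient `A^∞ = ℓ^∞(ℕ, A)/c₀(A)` of
bounded sequences in `A` modulo null sequences; `q` is the quotient map (its values
on unbounded sequences are irrelevant). -/
structure SeqAlg (A : Type*) [NormedRing A] [StarRing A] [NormedAlgebra ℂ A]
    (Ainf : Type*) [Ring Ainf] [StarRing Ainf] [Algebra ℂ Ainf] where
  q : (ℕ → A) → Ainf
  surj : ∀ z : Ainf, ∃ a : ℕ → A, IsBddSeq a ∧ q a = z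
  q_add : ∀ a b : ℕ → A, IsBddSeq a → IsBddSeq b → q (a + b) = q a + q b
  q_mul : ∀ a b : ℕ → A, IsBddSeq a → IsBddSeq b → q (a * b) = q a * q b
  q_smul : ∀ (c : ℂ) (a : ℕ → A), IsBddSeq a → q (c • a) = c • q a
  q_star : ∀ a : ℕ → A, IsBddSeq a → q (star a) = star (q a)
  q_one : q 1 = 1
  q_eq_zero_iff : ∀ a : ℕ → A, IsBddSeq a →
    (q a = 0 ↔ Filter.Tendsto (fun n => ‖a n‖) Filter.atTop (nhds 0))

/-- The canonical embedding of `A` into `Ainf` as (classes of) constant sequences. -/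
def SeqAlg.incl {A : Type*} [NormedRing A] [StarRing A] [NormedAlgebra ℂ A]
    {Ainf : Type*} [Ring Ainf] [StarRing Ainf] [Algebra ℂ Ainf]
    (S : SeqAlg A Ainf) (x : A) : Ainf := S.q fun _ => x


namespace RohlinAux

variable {B : Type*} [NormedRing B] [StarRing B] [CStarRing B] [NormedAlgebra ℂ B]
    [CompleteSpace B] [StarModule ℂ B] [PartialOrder B] [StarOrderedRing B]

noncomputable abbrev cstar : CStarAlgebra B :=
  { ‹NormedRing B›, ‹StarRing B›, ‹CompleteSpace B›, ‹CStarRing B›,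
    ‹NormedAlgebra ℂ B›, ‹StarModule ℂ B› with }

attribute [local instance] cstar

variable (Φ : B → B)

theorem map_zero' (hsmul : ∀ (c : ℂ) (x : B), Φ (c • x) = c • Φ x) : Φ 0 = 0 := by
  simpa using hsmul 0 0

theorem map_neg' (hsmul : ∀ (c : ℂ) (x : B), Φ (c • x) = c • Φ x) (x : B) :
    Φ (-x) = -Φ x := by
  simpa using hsmul (-1) x

theorem map_sub' (hadd : ∀ x y : B, Φ (x + y) = Φ x + Φ y)
    (hsmul : ∀ (c : ℂ) (x : B), Φ (c • x) = c • Φ x) (x y : B) :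
    Φ (x - y) = Φ x - Φ y := by
  rw [sub_eq_add_neg, hadd, map_neg' Φ hsmul, sub_eq_add_neg]

theorem map_sum' (hadd : ∀ x y : B, Φ (x + y) = Φ x + Φ y)
    (hsmul : ∀ (c : ℂ) (x : B), Φ (c • x) = c • Φ x)
    {ι : Type*} (s : Finset ι) (f : ι → B) :
    Φ (∑ i ∈ s, f i) = ∑ i ∈ s, Φ (f i) := by
  classical
  induction s using Finset.cons_induction with
  | empty => simpa using map_zero' Φ hsmul
  | cons i s hi ih => rw [Finset.sum_cons, hadd, ih, Finset.sum_cons]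

theorem posmap_mono (hadd : ∀ x y : B, Φ (x + y) = Φ x + Φ y)
    (hsmul : ∀ (c : ℂ) (x : B), Φ (c • x) = c • Φ x)
    (hpos : ∀ x : B, 0 ≤ Φ (star x * x)) {x y : B} (hxy : x ≤ y) : Φ x ≤ Φ y := by
  have hd : (0 : B) ≤ y - x := sub_nonneg.mpr hxy
  have h0 : 0 ≤ Φ (y - x) := by
    have := hpos (CFC.sqrt (y - x))
    rwa [(IsSelfAdjoint.of_nonneg (CFC.sqrt_nonneg (a := y - x))).star_eq,
      CFC.sqrt_mul_sqrt_self (y - x) hd] at this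
  rw [map_sub' Φ hadd hsmul] at h0
  exact sub_nonneg.mp h0

theorem posmap_norm (hadd : ∀ x y : B, Φ (x + y) = Φ x + Φ y)
    (hsmul : ∀ (c : ℂ) (x : B), Φ (c • x) = c • Φ x)
    (hpos : ∀ x : B, 0 ≤ Φ (star x * x)) (hone : Φ 1 = 1)
    {s : B} (hs : star s = s) : ‖Φ s‖ ≤ 3 * ‖(1 : B)‖ * ‖s‖ := by
  set r : ℝ := ‖s‖ with hr
  have hr0 : 0 ≤ r := norm_nonneg s
  have hAlg : ∀ u : ℝ, algebraMap ℝ B u = (u : ℂ) • (1 : B) := by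
    intro u
    rw [IsScalarTower.algebraMap_apply ℝ ℂ B, Algebra.algebraMap_eq_smul_one,
      Complex.coe_algebraMap]
  have hPhiAlg : ∀ u : ℝ, Φ (algebraMap ℝ B u) = algebraMap ℝ B u := by
    intro u
    rw [hAlg, hsmul, hone]
  have hsa : IsSelfAdjoint s := hs
  have h1 : Φ s ≤ algebraMap ℝ B r := by
    have := posmap_mono Φ hadd hsmul hpos (hsa.le_algebraMap_norm_self)
    rwa [hPhiAlg] at this
  have h2 : -(algebraMap ℝ B r) ≤ Φ s := by
    have := posmap_mono Φ hadd hsmul hpos (hsa.neg_algebraMap_norm_le_self)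
    rwa [map_neg' Φ hsmul, hPhiAlg] at this
  have h0le : (0 : B) ≤ Φ s + algebraMap ℝ B r := by
    have := add_le_add_left h2 (algebraMap ℝ B r)
    simpa using this
  have hle2 : Φ s + algebraMap ℝ B r ≤ algebraMap ℝ B (2 * r) := by
    have := add_le_add_left h1 (algebraMap ℝ B r)
    rwa [show algebraMap ℝ B r + algebraMap ℝ B r = algebraMap ℝ B (2 * r) by
      rw [two_mul, map_add]] at this
  have hn1 : ‖Φ s + algebraMap ℝ B r‖ ≤ ‖algebraMap ℝ B (2 * r)‖ :=
    CStarAlgebra.norm_le_norm_of_nonneg_of_le h0le hle2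
  have hnorm_alg : ∀ u : ℝ, ‖algebraMap ℝ B u‖ = |u| * ‖(1 : B)‖ := by
    intro u
    rw [hAlg, norm_smul]
    simp
  calc ‖Φ s‖ = ‖Φ s + algebraMap ℝ B r - algebraMap ℝ B r‖ := by
        rw [add_sub_cancel_right]
    _ ≤ ‖Φ s + algebraMap ℝ B r‖ + ‖algebraMap ℝ B r‖ := norm_sub_le _ _
    _ ≤ ‖algebraMap ℝ B (2 * r)‖ + ‖algebraMap ℝ B r‖ := by linarith
    _ = |2 * r| * ‖(1 : B)‖ + |r| * ‖(1 : B)‖ := by rw [hnorm_alg, hnorm_alg]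
    _ = 3 * ‖(1 : B)‖ * r := by
        rw [abs_of_nonneg hr0, abs_of_nonneg (by linarith : (0:ℝ) ≤ 2 * r)]; ring

end RohlinAux

namespace RohlinAux

variable {B : Type*} [NormedRing B] [StarRing B] [CStarRing B] [NormedAlgebra ℂ B]
    [CompleteSpace B] [StarModule ℂ B] [PartialOrder B] [StarOrderedRing B]

attribute [local instance] cstar

theorem ehat_left (S : WatataniSetup B) {p : B} (hp : p ∈ S.A) (z : B) :
    S.Ehat (p * z) = p * S.Ehat z := by
  simpa using S.Ehat_bimod p hp 1 (one_mem _) z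

theorem ehat_right (S : WatataniSetup B) {p : B} (hp : p ∈ S.A) (z : B) :
    S.Ehat (z * p) = S.Ehat z * p := by
  simpa using S.Ehat_bimod 1 (one_mem _) p hp z

theorem cs_bound (S : WatataniSetup B) (u v : B) :
    ‖S.Ehat (star v * u)‖ ^ 2 ≤
      (‖S.Ehat (star v * v)‖ + 1) ^ 2 * ‖S.Ehat (star u * u)‖ := by
  set w := S.Ehat (star v * u) with hw
  set D := S.Ehat (star v * v) with hD
  set M := ‖D‖ with hM
  set N := ‖S.Ehat (star u * u)‖ with hN
  have hM0 : 0 ≤ M := norm_nonneg _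
  have hN0 : 0 ≤ N := norm_nonneg _
  have hM1 : (0:ℝ) < M + 1 := by linarith
  set t : ℝ := 1 / (M + 1) with ht
  set c : ℂ := (t : ℂ) with hc
  set τ : B := algebraMap ℂ B c with hτ
  have hτA : τ ∈ S.A := algebraMap_mem S.A c
  have hwA : w ∈ S.A := S.Ehat_mem _
  have hswA : star w ∈ S.A := star_mem hwA
  have hτstar : star τ = τ := by
    rw [hτ, ← algebraMap_star_comm, hc, Complex.star_def, Complex.conj_ofReal]
  have hτ1 : τ = c • (1:B) := by rw [hτ, Algebra.algebraMap_eq_smul_one]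
  have hτw : τ * w = c • w := by rw [hτ1, smul_mul_assoc, one_mul]
  have hsw : S.Ehat (star u * v) = star w := by
    have h : star u * v = star (star v * u) := by simp [star_mul]
    rw [h, S.Ehat_star]
  set x : B := u - v * (τ * w) with hx
  set G := star w * w with hG
  -- expansion of star x * x
  have hxexp : star x * x =
      star u * u - star u * (v * (τ * w)) - star w * (τ * (star v * u))
        + star w * (τ * (star v * (v * (τ * w)))) := by
    have hsx : star x = star u - star w * (τ * star v) := by
      rw [hx, star_sub, star_mul, star_mul, hτstar, mul_assoc]
    rw [hx, hsx]
    noncomm_ring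
  have hT1 : S.Ehat (star u * (v * (τ * w))) = c • G := by
    rw [show star u * (v * (τ * w)) = (star u * v) * (τ * w) by noncomm_ring,
      ehat_right S (mul_mem hτA hwA) _, hsw, hτw, mul_smul_comm, hG]
  have hT2 : S.Ehat (star w * (τ * (star v * u))) = c • G := by
    rw [show star w * (τ * (star v * u)) = (star w * τ) * (star v * u) by noncomm_ring,
      ehat_left S (mul_mem hswA hτA) _, ← hw, mul_assoc, hτw, mul_smul_comm, hG]
  have hT3 : S.Ehat (star w * (τ * (star v * (v * (τ * w))))) =
      star w * τ * D * (τ * w) := by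
    rw [show star w * (τ * (star v * (v * (τ * w)))) =
      (star w * τ) * (star v * v) * (τ * w) by noncomm_ring,
      S.Ehat_bimod _ (mul_mem hswA hτA) _ (mul_mem hτA hwA), hD]
  have h0 : (0:B) ≤ S.Ehat (star u * u) - c • G - c • G + star w * τ * D * (τ * w) := by
    have h := S.Ehat_pos x
    rw [hxexp, S.Ehat_add, map_sub' S.Ehat S.Ehat_add S.Ehat_smul,
      map_sub' S.Ehat S.Ehat_add S.Ehat_smul, hT1, hT2, hT3] at h
    exact h
  -- conjugation bound
  have hDle : D ≤ algebraMap ℝ B M := by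
    have hDpos : (0:B) ≤ D := by rw [hD]; exact S.Ehat_pos v
    exact IsSelfAdjoint.le_algebraMap_norm_self (IsSelfAdjoint.of_nonneg hDpos)
  have hconj : star w * τ * D * (τ * w) ≤ star w * τ * algebraMap ℝ B M * (τ * w) := by
    have h := star_left_conjugate_le_conjugate hDle (τ * w)
    rwa [star_mul, hτstar] at h
  have hMalg : algebraMap ℝ B M = ((M:ℂ)) • (1:B) := by
    rw [IsScalarTower.algebraMap_apply ℝ ℂ B, Algebra.algebraMap_eq_smul_one,
      Complex.coe_algebraMap]
  have hRHS : star w * τ * algebraMap ℝ B M * (τ * w) = ((M:ℂ) * (c * c)) • G := by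
    rw [hτw, hMalg, hτ1, hG]
    simp only [smul_mul_assoc, mul_smul_comm, smul_smul, mul_one, one_mul]
    ring_nf
  have h3 : star w * τ * D * (τ * w) ≤ ((M:ℂ) * (c * c)) • G := hRHS ▸ hconj
  have h4 : c • G + c • G - star w * τ * D * (τ * w) ≤ S.Ehat (star u * u) := by
    refine sub_nonneg.mp ?_
    have habel : S.Ehat (star u * u) - (c • G + c • G - star w * τ * D * (τ * w)) =
        S.Ehat (star u * u) - c • G - c • G + star w * τ * D * (τ * w) := by abel
    rw [habel]; exact h0
  have h5 : c • G + c • G - ((M:ℂ) * (c * c)) • G ≤ S.Ehat (star u * u) :=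
    le_trans (sub_le_sub_left h3 _) h4
  have h6 : (c + c - (M:ℂ) * (c * c)) • G = c • G + c • G - ((M:ℂ) * (c * c)) • G := by
    rw [sub_smul, add_smul]
  set α : ℝ := 2 * t - M * (t * t) with hαdef
  have hcoe : (c + c - (M:ℂ) * (c * c)) = ((α : ℝ) : ℂ) := by
    rw [hαdef, hc]; push_cast; ring
  have hαval : α * (M + 1)^2 = M + 2 := by
    rw [hαdef, ht]; field_simp; ring
  have hαpos : 0 < α := by
    have h7 : α = (M + 2) / ((M + 1)^2) := by
      field_simp [hαval.symm]; exact hαval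
    rw [h7]; positivity
  have key1 : ((α : ℝ) : ℂ) • G ≤ S.Ehat (star u * u) := by
    rw [← hcoe, h6]; exact h5
  have hL0 : (0:B) ≤ ((α : ℝ) : ℂ) • G := by
    have h7 : ((α : ℝ) : ℂ) • G =
        star (((Real.sqrt α : ℝ) : ℂ) • w) * (((Real.sqrt α : ℝ) : ℂ) • w) := by
      rw [star_smul, smul_mul_smul_comm, hG, Complex.star_def, Complex.conj_ofReal]
      norm_cast
      rw [Real.mul_self_sqrt hαpos.le]
    rw [h7]; exact star_mul_self_nonneg _
  have hnorm : ‖((α : ℝ) : ℂ) • G‖ ≤ N := by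
    rw [hN]; exact CStarAlgebra.norm_le_norm_of_nonneg_of_le hL0 key1
  have hGnorm : ‖((α : ℝ) : ℂ) • G‖ = α * (‖w‖ * ‖w‖) := by
    rw [norm_smul, Complex.norm_real, Real.norm_eq_abs, abs_of_pos hαpos, hG,
      CStarRing.norm_star_mul_self]
  rw [hGnorm] at hnorm
  have h8 : (M + 1)^2 * (α * (‖w‖ * ‖w‖)) ≤ (M + 1)^2 * N :=
    mul_le_mul_of_nonneg_left hnorm (by positivity)
  have h9 : (M + 1)^2 * (α * (‖w‖ * ‖w‖)) = (M + 2) * (‖w‖ * ‖w‖) := by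
    calc (M + 1)^2 * (α * (‖w‖ * ‖w‖)) = (α * (M + 1)^2) * (‖w‖ * ‖w‖) := by ring
      _ = (M + 2) * (‖w‖ * ‖w‖) := by rw [hαval]
  rw [pow_two]
  nlinarith [mul_self_nonneg ‖w‖]

end RohlinAux

namespace RohlinAux
set_option linter.unusedSectionVars false

variable {B : Type*} [NormedRing B] [StarRing B] [CStarRing B] [NormedAlgebra ℂ B]
    [CompleteSpace B] [StarModule ℂ B] [PartialOrder B] [StarOrderedRing B]

theorem norm_mul_le₃ (x y z : B) : ‖x * y * z‖ ≤ ‖x‖ * ‖y‖ * ‖z‖ :=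
  le_trans (norm_mul_le _ _) (mul_le_mul_of_nonneg_right (norm_mul_le _ _) (norm_nonneg _))

theorem ind_comm (S : WatataniSetup B) (x : B) : S.ind * x = x * S.ind :=
  (S.ind_central x).eq

theorem indInv_comm (S : WatataniSetup B) (x : B) : S.indInv * x = x * S.indInv := by
  calc S.indInv * x = S.indInv * (x * (S.ind * S.indInv)) := by rw [S.ind_mul_inv, mul_one]
    _ = S.indInv * ((x * S.ind) * S.indInv) := by rw [mul_assoc]
    _ = S.indInv * ((S.ind * x) * S.indInv) := by rw [ind_comm]
    _ = (S.indInv * S.ind) * (x * S.indInv) := by noncomm_ring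
    _ = x * S.indInv := by rw [S.inv_mul_ind, one_mul]

theorem ind_star (S : WatataniSetup B) : star S.ind = S.ind :=
  (IsSelfAdjoint.of_nonneg S.ind_pos).star_eq

theorem indInv_star (S : WatataniSetup B) : star S.indInv = S.indInv := by
  have h1 : star S.indInv * S.ind = 1 := by
    rw [← ind_star S, ← star_mul, S.ind_mul_inv, star_one]
  calc star S.indInv = star S.indInv * (S.ind * S.indInv) := by rw [S.ind_mul_inv, mul_one]
    _ = (star S.indInv * S.ind) * S.indInv := by rw [mul_assoc]
    _ = S.indInv := by rw [h1, one_mul]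

/-- the key Watatani identity `z e_P = ind Ê(z e_P) e_P`. -/
theorem dagger (S : WatataniSetup B) (z : B) :
    z * S.eP = S.ind * S.Ehat (z * S.eP) * S.eP := by
  obtain ⟨n, x, y, hx, hy, hz⟩ := S.span z
  have h1 : z * S.eP = ∑ i, (x i * S.E (y i)) * S.eP := by
    rw [hz, Finset.sum_mul]
    refine Finset.sum_congr rfl fun i _ => ?_
    calc (x i * S.eP * y i) * S.eP = x i * (S.eP * y i * S.eP) := by noncomm_ring
      _ = x i * (S.E (y i) * S.eP) := by rw [S.eP_conj _ (hy i)]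
      _ = (x i * S.E (y i)) * S.eP := by noncomm_ring
  have h2 : S.Ehat (z * S.eP) = ∑ i, S.indInv * (x i * S.E (y i)) := by
    rw [h1, map_sum' S.Ehat S.Ehat_add S.Ehat_smul]
    refine Finset.sum_congr rfl fun i _ => ?_
    have h := S.Ehat_eP (x i * S.E (y i))
      (mul_mem (hx i) (S.le (S.E_mem _ (hy i)))) 1 (one_mem _)
    simpa using h
  rw [h2, Finset.mul_sum, Finset.sum_mul, h1]
  refine Finset.sum_congr rfl fun i _ => ?_
  refine (calc (S.ind * (S.indInv * (x i * S.E (y i)))) * S.eP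
      = ((S.ind * S.indInv) * (x i * S.E (y i))) * S.eP := by noncomm_ring
    _ = (x i * S.E (y i)) * S.eP := by rw [S.ind_mul_inv, one_mul]).symm

theorem recon (S : WatataniSetup B) {n : ℕ} (x y : Fin n → B)
    (h1 : (1 : B) = ∑ i, x i * S.eP * y i) (z : B) :
    z = ∑ i, (S.ind * S.Ehat (z * (x i * S.eP)) * S.eP) * y i := by
  calc z = z * 1 := (mul_one z).symm
    _ = ∑ i, z * (x i * S.eP * y i) := by rw [h1, Finset.mul_sum]
    _ = ∑ i, ((z * x i) * S.eP) * y i := by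
        refine Finset.sum_congr rfl fun i _ => ?_; noncomm_ring
    _ = ∑ i, (S.ind * S.Ehat ((z * x i) * S.eP) * S.eP) * y i := by
        refine Finset.sum_congr rfl fun i _ => ?_
        rw [← dagger S (z * x i)]
    _ = ∑ i, (S.ind * S.Ehat (z * (x i * S.eP)) * S.eP) * y i := by
        refine Finset.sum_congr rfl fun i _ => ?_
        rw [mul_assoc z (x i) S.eP]

theorem star_fix_conj (S : WatataniSetup B) {b : B} (hb : star b = b) :
    star (S.ind * (b * S.eP * b)) = S.ind * (b * S.eP * b) := by
  calc star (S.ind * (b * S.eP * b))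
      = star (b * S.eP * b) * star S.ind := star_mul _ _
    _ = (star b * (star S.eP * star b)) * S.ind := by
        rw [star_mul, star_mul, ind_star S]
    _ = (b * (S.eP * b)) * S.ind := by rw [hb, S.eP_star]
    _ = S.ind * (b * (S.eP * b)) := (ind_comm S _).symm
    _ = S.ind * (b * S.eP * b) := by rw [← mul_assoc b S.eP b]

theorem star_p_fix (S : WatataniSetup B) {b : B} (hb : star b = b) :
    star (b - S.ind * (b * S.eP * b)) = b - S.ind * (b * S.eP * b) := by
  rw [star_sub, hb, star_fix_conj S hb]

theorem star_sq_sub {b : B} (hb : star b = b) : star (b * b - b) = b * b - b := by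
  rw [star_sub, star_mul, hb]

/-- closed form for `Ê(p²)` where `p = b - ind·(b e_P b)`. -/
theorem ehat_pp (S : WatataniSetup B) {b : B} (hbA : b ∈ S.A) :
    S.Ehat ((b - S.ind * (b * S.eP * b)) * (b - S.ind * (b * S.eP * b))) =
      b * b - b * b * b - b * b * b + S.ind * (b * S.E (b * b) * b) := by
  have hindA : S.ind ∈ S.A := S.le S.ind_mem
  have e1 : (b - S.ind * (b * S.eP * b)) * (b - S.ind * (b * S.eP * b)) =
      b * b - b * (S.ind * (b * S.eP * b)) - (S.ind * (b * S.eP * b)) * b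
        + (S.ind * (b * S.eP * b)) * (S.ind * (b * S.eP * b)) := by noncomm_ring
  have hbg : b * (S.ind * (b * S.eP * b)) = (S.ind * (b * b)) * S.eP * b := by
    calc b * (S.ind * (b * S.eP * b)) = (b * S.ind) * (b * S.eP * b) := by rw [← mul_assoc]
      _ = (S.ind * b) * (b * S.eP * b) := by rw [ind_comm]
      _ = (S.ind * (b * b)) * S.eP * b := by noncomm_ring
  have hgb : (S.ind * (b * S.eP * b)) * b = (S.ind * b) * S.eP * (b * b) := by noncomm_ring
  have hgg : (S.ind * (b * S.eP * b)) * (S.ind * (b * S.eP * b)) =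
      ((S.ind * S.ind) * (b * S.E (b * b))) * S.eP * b := by
    calc (S.ind * (b * S.eP * b)) * (S.ind * (b * S.eP * b))
        = ((S.ind * (b * S.eP * b)) * S.ind) * (b * S.eP * b) := by rw [← mul_assoc]
      _ = (S.ind * (S.ind * (b * S.eP * b))) * (b * S.eP * b) := by rw [← ind_comm]
      _ = (S.ind * S.ind) * (b * (S.eP * (b * b) * S.eP) * b) := by noncomm_ring
      _ = (S.ind * S.ind) * (b * (S.E (b * b) * S.eP) * b) := by
          rw [S.eP_conj _ (mul_mem hbA hbA)]
      _ = ((S.ind * S.ind) * (b * S.E (b * b))) * S.eP * b := by noncomm_ring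
  have E1 : S.Ehat (b * b) = b * b := S.Ehat_fix _ (mul_mem hbA hbA)
  have E2 : S.Ehat ((S.ind * (b * b)) * S.eP * b) = b * b * b := by
    rw [S.Ehat_eP _ (mul_mem hindA (mul_mem hbA hbA)) _ hbA]
    calc S.indInv * ((S.ind * (b * b)) * b) = (S.indInv * S.ind) * ((b * b) * b) := by
          noncomm_ring
      _ = b * b * b := by rw [S.inv_mul_ind, one_mul]
  have E3 : S.Ehat ((S.ind * b) * S.eP * (b * b)) = b * b * b := by
    rw [S.Ehat_eP _ (mul_mem hindA hbA) _ (mul_mem hbA hbA)]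
    calc S.indInv * ((S.ind * b) * (b * b)) = (S.indInv * S.ind) * (b * (b * b)) := by
          noncomm_ring
      _ = b * b * b := by rw [S.inv_mul_ind, one_mul]; noncomm_ring
  have E4 : S.Ehat (((S.ind * S.ind) * (b * S.E (b * b))) * S.eP * b) =
      S.ind * (b * S.E (b * b) * b) := by
    rw [S.Ehat_eP _ (mul_mem (mul_mem hindA hindA)
      (mul_mem hbA (S.le (S.E_mem _ (mul_mem hbA hbA))))) _ hbA]
    calc S.indInv * (((S.ind * S.ind) * (b * S.E (b * b))) * b)
        = (S.indInv * S.ind) * (S.ind * (b * S.E (b * b) * b)) := by noncomm_ring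
      _ = S.ind * (b * S.E (b * b) * b) := by rw [S.inv_mul_ind, one_mul]
  rw [e1, hbg, hgb, hgg, S.Ehat_add, map_sub' S.Ehat S.Ehat_add S.Ehat_smul,
    map_sub' S.Ehat S.Ehat_add S.Ehat_smul, E1, E2, E3, E4]

end RohlinAux

namespace RohlinAux
set_option linter.unusedSectionVars false

variable {B : Type*} [NormedRing B] [StarRing B] [CStarRing B] [NormedAlgebra ℂ B]
    [CompleteSpace B] [StarModule ℂ B] [PartialOrder B] [StarOrderedRing B]
variable {Binf : Type*} [Ring Binf] [StarRing Binf] [Algebra ℂ Binf]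

theorem bdd_const (x : B) : IsBddSeq (fun _ : ℕ => x) := ⟨‖x‖, fun _ => le_rfl⟩

theorem bdd_of_le {a : ℕ → B} {C : ℝ} (h : ∀ n, ‖a n‖ ≤ C) : IsBddSeq a := ⟨C, h⟩

theorem bdd_mul {a b : ℕ → B} (ha : IsBddSeq a) (hb : IsBddSeq b) : IsBddSeq (a * b) := by
  obtain ⟨Ca, hCa⟩ := ha; obtain ⟨Cb, hCb⟩ := hb
  refine ⟨Ca * Cb, fun n => ?_⟩
  calc ‖(a * b) n‖ = ‖a n * b n‖ := rfl
    _ ≤ ‖a n‖ * ‖b n‖ := norm_mul_le _ _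
    _ ≤ Ca * Cb := mul_le_mul (hCa n) (hCb n) (norm_nonneg _)
        (le_trans (norm_nonneg _) (hCa n))

theorem bdd_add {a b : ℕ → B} (ha : IsBddSeq a) (hb : IsBddSeq b) : IsBddSeq (a + b) := by
  obtain ⟨Ca, hCa⟩ := ha; obtain ⟨Cb, hCb⟩ := hb
  exact ⟨Ca + Cb, fun n => le_trans (norm_add_le _ _) (add_le_add (hCa n) (hCb n))⟩

theorem bdd_star {a : ℕ → B} (ha : IsBddSeq a) : IsBddSeq (star a) := by
  obtain ⟨Ca, hCa⟩ := ha
  exact ⟨Ca, fun n => by simpa [norm_star] using hCa n⟩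

theorem bdd_sub {a b : ℕ → B} (ha : IsBddSeq a) (hb : IsBddSeq b) : IsBddSeq (a - b) := by
  obtain ⟨Ca, hCa⟩ := ha; obtain ⟨Cb, hCb⟩ := hb
  exact ⟨Ca + Cb, fun n => le_trans (norm_sub_le _ _) (add_le_add (hCa n) (hCb n))⟩

theorem q_sub (T : SeqAlg B Binf) {a b : ℕ → B} (ha : IsBddSeq a) (hb : IsBddSeq b) :
    T.q (a - b) = T.q a - T.q b := by
  have hs : a - b = a + (-1 : ℂ) • b := by
    funext n; simp [sub_eq_add_neg]
  have hb' : IsBddSeq ((-1 : ℂ) • b) := by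
    obtain ⟨Cb, hCb⟩ := hb
    exact ⟨Cb, fun n => by simpa [norm_smul] using hCb n⟩
  rw [hs, T.q_add a _ ha hb', T.q_smul (-1) b hb, neg_one_smul, ← sub_eq_add_neg]

theorem incl_add (T : SeqAlg B Binf) (x y : B) :
    T.incl (x + y) = T.incl x + T.incl y := by
  have h : (fun _ : ℕ => x + y) = (fun _ : ℕ => x) + (fun _ : ℕ => y) := rfl
  rw [SeqAlg.incl, h, T.q_add _ _ (bdd_const x) (bdd_const y)]; rfl

theorem incl_mul (T : SeqAlg B Binf) (x y : B) :
    T.incl (x * y) = T.incl x * T.incl y := by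
  have h : (fun _ : ℕ => x * y) = (fun _ : ℕ => x) * (fun _ : ℕ => y) := rfl
  rw [SeqAlg.incl, h, T.q_mul _ _ (bdd_const x) (bdd_const y)]; rfl

theorem incl_one (T : SeqAlg B Binf) : T.incl (1 : B) = 1 := T.q_one

theorem incl_zero (T : SeqAlg B Binf) : T.incl (0 : B) = 0 := by
  have h := incl_add T 0 0
  rw [add_zero] at h
  exact (add_eq_left.mp h.symm)

theorem incl_sum (T : SeqAlg B Binf) {ι : Type*} (s : Finset ι) (f : ι → B) :
    T.incl (∑ i ∈ s, f i) = ∑ i ∈ s, T.incl (f i) := by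
  classical
  induction s using Finset.cons_induction with
  | empty => simpa using incl_zero T
  | cons i s hi ih => rw [Finset.sum_cons, incl_add, ih, Finset.sum_cons]

end RohlinAux

open RohlinAux in
/-- if `E : A → P` has the Rohlin property with Rohlin projection
`e ∈ A_∞` (so `E^∞(e) = (Index E)⁻¹·1` and `x ↦ xe` is injective on `A`), then the
dual conditional expectation `Ê : C*⟨A, e_P⟩ → A` is approximately representable with
the same projection `e`: `e z e = Ê(z) e` for every `z` in the basic construction,
and `x ↦ xe` is injective on `A`. -/
theorem rohlin_implies_dual_approximately_representable
    {B : Type*} [NormedRing B] [StarRing B] [CStarRing B] [NormedAlgebra ℂ B]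
    [CompleteSpace B] [StarModule ℂ B] [PartialOrder B] [StarOrderedRing B]
    (S : WatataniSetup B)
    {Binf : Type*} [Ring Binf] [StarRing Binf] [Algebra ℂ Binf] (T : SeqAlg B Binf)
    (Einf : Binf → Binf)
    (hEinf : ∀ a : ℕ → B, IsBddSeq a → Einf (T.q a) = T.q fun n => S.E (a n))
    -- the Rohlin projection `e ∈ A_∞`
    (e : Binf) (he_rep : ∃ a : ℕ → B, IsBddSeq a ∧ (∀ n, a n ∈ S.A) ∧ T.q a = e)
    (he_idem : e * e = e) (he_star : star e = e)
    (he_comm : ∀ x ∈ S.A, Commute e (T.incl x))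
    (he_exp : Einf e = T.incl S.indInv)
    (he_inj : ∀ x ∈ S.A, T.incl x * e = 0 → x = 0) :
    (∀ z : B, e * T.incl z * e = T.incl (S.Ehat z) * e) ∧
      (∀ x ∈ S.A, T.incl x * e = 0 → x = 0) := by
  classical
  refine ⟨?_, he_inj⟩
  -- representative sequence for `e`, made positive
  obtain ⟨a, ha_bdd, ha_mem, ha_q⟩ := he_rep
  obtain ⟨C0, hC0⟩ := ha_bdd
  set C : ℝ := max C0 0 with hCdef
  have hC : ∀ n, ‖a n‖ ≤ C := fun n => le_trans (hC0 n) (le_max_left _ _)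
  have hCpos : (0:ℝ) ≤ C := le_max_right _ _
  have ha_bdd' : IsBddSeq a := ⟨C, hC⟩
  set Cb : ℝ := C * C with hCbdef
  have hCb0 : (0:ℝ) ≤ Cb := mul_nonneg hCpos hCpos
  set b : ℕ → B := fun n => star (a n) * a n with hbdef
  have hbA : ∀ n, b n ∈ S.A := fun n => mul_mem (star_mem (ha_mem n)) (ha_mem n)
  have hb_star : ∀ n, star (b n) = b n := fun n => by
    show star (star (a n) * a n) = star (a n) * a n
    rw [star_mul, star_star]
  have hCb : ∀ n, ‖b n‖ ≤ Cb := fun n => by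
    show ‖star (a n) * a n‖ ≤ Cb
    calc ‖star (a n) * a n‖ ≤ ‖star (a n)‖ * ‖a n‖ := norm_mul_le _ _
      _ ≤ C * C := by
          rw [norm_star]
          exact mul_le_mul (hC n) (hC n) (norm_nonneg _) hCpos
  have hb_bdd : IsBddSeq b := ⟨Cb, hCb⟩
  have hqb : T.q b = e := by
    have h1 : b = star a * a := rfl
    rw [h1, T.q_mul _ _ (bdd_star ha_bdd') ha_bdd', T.q_star a ha_bdd',
      ha_q, he_star, he_idem]
  -- `b² - b → 0`
  have hbb_bdd : IsBddSeq (b * b) := bdd_mul hb_bdd hb_bdd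
  have hqbb : T.q (b * b) = e := by rw [T.q_mul _ _ hb_bdd hb_bdd, hqb, he_idem]
  have hδ0 : T.q (b * b - b) = 0 := by
    rw [q_sub T hbb_bdd hb_bdd, hqbb, hqb, sub_self]
  have hδ : Filter.Tendsto (fun n => ‖b n * b n - b n‖) Filter.atTop (nhds 0) :=
    (T.q_eq_zero_iff _ (bdd_sub hbb_bdd hb_bdd)).mp hδ0
  -- `E(b n) - indInv → 0`
  have hE1 : S.E 1 = 1 := S.E_fix 1 (one_mem _)
  have hEb_bd : ∀ n, ‖S.E (b n)‖ ≤ 3 * ‖(1:B)‖ * Cb := fun n => by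
    calc ‖S.E (b n)‖ ≤ 3 * ‖(1:B)‖ * ‖b n‖ :=
        posmap_norm S.E S.E_add S.E_smul S.E_pos hE1 (hb_star n)
      _ ≤ 3 * ‖(1:B)‖ * Cb := by
          refine mul_le_mul_of_nonneg_left (hCb n) (by positivity)
  have hEb_bdd : IsBddSeq (fun n => S.E (b n)) := ⟨_, hEb_bd⟩
  have hqEb : T.q (fun n => S.E (b n)) = T.incl S.indInv := by
    have h := hEinf b hb_bdd
    rw [hqb] at h
    rw [← h, he_exp]
  have hε0 : T.q ((fun n => S.E (b n)) - fun _ => S.indInv) = 0 := by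
    rw [q_sub T hEb_bdd (bdd_const _), hqEb,
      show T.q (fun _ : ℕ => S.indInv) = T.incl S.indInv from rfl, sub_self]
  have hε : Filter.Tendsto (fun n => ‖S.E (b n) - S.indInv‖) Filter.atTop (nhds 0) :=
    (T.q_eq_zero_iff _ (bdd_sub hEb_bdd (bdd_const _))).mp hε0
  -- the almost-projection `p`
  set p : ℕ → B := fun n => b n - S.ind * (b n * S.eP * b n) with hpdef
  have hg_bd : ∀ n, ‖S.ind * (b n * S.eP * b n)‖ ≤ ‖S.ind‖ * (Cb * ‖S.eP‖ * Cb) := by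
    intro n
    refine le_trans (norm_mul_le _ _) (mul_le_mul_of_nonneg_left ?_ (norm_nonneg _))
    refine le_trans (norm_mul_le₃ _ _ _) ?_
    exact mul_le_mul (mul_le_mul (hCb n) le_rfl (norm_nonneg _) hCb0) (hCb n)
      (norm_nonneg _) (mul_nonneg hCb0 (norm_nonneg _))
  have hp_bdd : IsBddSeq p := by
    refine ⟨Cb + ‖S.ind‖ * (Cb * ‖S.eP‖ * Cb), fun n => ?_⟩
    show ‖b n - S.ind * (b n * S.eP * b n)‖ ≤ _
    exact le_trans (norm_sub_le _ _) (add_le_add (hCb n) (hg_bd n))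
  have hp_star : ∀ n, star (p n) = p n := fun n => star_p_fix S (hb_star n)
  -- closed form and bound for `Ê(p n * p n)`
  have hsplit : ∀ n, S.Ehat (p n * p n) =
      (b n * b n - b n)
      - (b n * (b n * b n - b n) + (b n * b n - b n))
      - (b n * (b n * b n - b n) + (b n * b n - b n))
      + (S.ind * (b n * S.E (b n * b n - b n) * b n)
         + (S.ind * (b n * (S.E (b n) - S.indInv) * b n) + (b n * b n - b n))) := by
    intro n
    have hpp := ehat_pp S (hbA n)
    have hE2 : S.E (b n * b n) = S.E (b n * b n - b n) + S.E (b n) := by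
      rw [map_sub' S.E S.E_add S.E_smul, sub_add_cancel]
    have hii : S.ind * (b n * S.indInv * b n) = b n * b n := by
      calc S.ind * (b n * S.indInv * b n)
          = S.ind * ((b n * S.indInv) * b n) := rfl
        _ = S.ind * ((S.indInv * b n) * b n) := by rw [← indInv_comm S (b n)]
        _ = (S.ind * S.indInv) * (b n * b n) := by noncomm_ring
        _ = b n * b n := by rw [S.ind_mul_inv, one_mul]
    calc S.Ehat (p n * p n)
        = b n * b n - b n * b n * b n - b n * b n * b n
          + S.ind * (b n * S.E (b n * b n) * b n) := hpp
      _ = b n * b n - b n * b n * b n - b n * b n * b n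
          + (S.ind * (b n * S.E (b n * b n - b n) * b n)
             + (S.ind * (b n * (S.E (b n) - S.indInv) * b n)
                + S.ind * (b n * S.indInv * b n))) := by
          rw [hE2, show S.E (b n) = (S.E (b n) - S.indInv) + S.indInv from
            (sub_add_cancel _ _).symm]
          noncomm_ring
      _ = _ := by rw [hii]; noncomm_ring
  set K1 : ℝ := 4 + 2 * Cb + ‖S.ind‖ * (Cb * (3 * ‖(1:B)‖) * Cb) with hK1
  set K2 : ℝ := ‖S.ind‖ * (Cb * Cb) with hK2
  have hN'le : ∀ n, ‖S.Ehat (p n * p n)‖ ≤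
      K1 * ‖b n * b n - b n‖ + K2 * ‖S.E (b n) - S.indInv‖ := by
    intro n
    have hδn : (0:ℝ) ≤ ‖b n * b n - b n‖ := norm_nonneg _
    have hεn : (0:ℝ) ≤ ‖S.E (b n) - S.indInv‖ := norm_nonneg _
    have hX2 : ‖b n * (b n * b n - b n) + (b n * b n - b n)‖ ≤
        Cb * ‖b n * b n - b n‖ + ‖b n * b n - b n‖ := by
      refine le_trans (norm_add_le _ _) (add_le_add ?_ le_rfl)
      exact le_trans (norm_mul_le _ _) (mul_le_mul_of_nonneg_right (hCb n) hδn)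
    have hβsa : star (b n * b n - b n) = b n * b n - b n := star_sq_sub (hb_star n)
    have hEβ : ‖S.E (b n * b n - b n)‖ ≤ 3 * ‖(1:B)‖ * ‖b n * b n - b n‖ :=
      posmap_norm S.E S.E_add S.E_smul S.E_pos hE1 hβsa
    have hX4 : ‖S.ind * (b n * S.E (b n * b n - b n) * b n)‖ ≤
        ‖S.ind‖ * (Cb * (3 * ‖(1:B)‖) * Cb) * ‖b n * b n - b n‖ := by
      refine le_trans (norm_mul_le _ _) ?_
      have h := le_trans (norm_mul_le₃ (b n) (S.E (b n * b n - b n)) (b n))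
        (mul_le_mul (mul_le_mul (hCb n) hEβ (norm_nonneg _) hCb0) (hCb n)
          (norm_nonneg _) (by positivity))
      calc ‖S.ind‖ * ‖b n * S.E (b n * b n - b n) * b n‖
          ≤ ‖S.ind‖ * (Cb * (3 * ‖(1:B)‖ * ‖b n * b n - b n‖) * Cb) :=
            mul_le_mul_of_nonneg_left h (norm_nonneg _)
        _ = ‖S.ind‖ * (Cb * (3 * ‖(1:B)‖) * Cb) * ‖b n * b n - b n‖ := by ring
    have hX5 : ‖S.ind * (b n * (S.E (b n) - S.indInv) * b n)‖ ≤
        K2 * ‖S.E (b n) - S.indInv‖ := by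
      refine le_trans (norm_mul_le _ _) ?_
      have h := le_trans (norm_mul_le₃ (b n) (S.E (b n) - S.indInv) (b n))
        (mul_le_mul (mul_le_mul (hCb n) le_rfl (norm_nonneg _) hCb0) (hCb n)
          (norm_nonneg _) (by positivity))
      calc ‖S.ind‖ * ‖b n * (S.E (b n) - S.indInv) * b n‖
          ≤ ‖S.ind‖ * (Cb * ‖S.E (b n) - S.indInv‖ * Cb) :=
            mul_le_mul_of_nonneg_left h (norm_nonneg _)
        _ = K2 * ‖S.E (b n) - S.indInv‖ := by rw [hK2]; ring
    have htot : ‖S.Ehat (p n * p n)‖ ≤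
        ‖b n * b n - b n‖
        + ‖b n * (b n * b n - b n) + (b n * b n - b n)‖
        + ‖b n * (b n * b n - b n) + (b n * b n - b n)‖
        + (‖S.ind * (b n * S.E (b n * b n - b n) * b n)‖
           + (‖S.ind * (b n * (S.E (b n) - S.indInv) * b n)‖ + ‖b n * b n - b n‖)) := by
      rw [hsplit n]
      refine le_trans (norm_add_le _ _) (add_le_add ?_ ?_)
      · refine le_trans (norm_sub_le _ _) (add_le_add ?_ le_rfl)
        exact le_trans (norm_sub_le _ _) le_rfl
      · exact le_trans (norm_add_le _ _) (add_le_add le_rfl (norm_add_le _ _))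
    rw [hK1]
    linarith [hX2, hX4, hX5, htot, mul_nonneg hCb0 hδn]
  have hN'0 : Filter.Tendsto (fun n => ‖S.Ehat (p n * p n)‖) Filter.atTop (nhds 0) := by
    refine squeeze_zero (fun n => norm_nonneg _) hN'le ?_
    have h := (hδ.const_mul K1).add (hε.const_mul K2)
    simpa using h
  -- span of 1 and reconstruction bound
  obtain ⟨m, xs, ys, hxs, hys, h1span⟩ := S.span 1
  have hcs : ∀ n (i : Fin m), ‖S.Ehat (p n * (xs i * S.eP))‖ ≤
      (‖S.Ehat (star (xs i * S.eP) * (xs i * S.eP))‖ + 1) *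
        Real.sqrt ‖S.Ehat (p n * p n)‖ := by
    intro n i
    have h1 : p n * (xs i * S.eP) = star (star (xs i * S.eP) * p n) := by
      rw [star_mul, star_star, hp_star n]
    have h2 : ‖S.Ehat (p n * (xs i * S.eP))‖ =
        ‖S.Ehat (star (xs i * S.eP) * p n)‖ := by
      rw [h1, S.Ehat_star, norm_star]
    have h3 := cs_bound S (p n) (xs i * S.eP)
    rw [hp_star n] at h3
    have hM1 : (0:ℝ) ≤ ‖S.Ehat (star (xs i * S.eP) * (xs i * S.eP))‖ + 1 := by positivity
    calc ‖S.Ehat (p n * (xs i * S.eP))‖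
        = Real.sqrt (‖S.Ehat (star (xs i * S.eP) * p n)‖ ^ 2) := by
          rw [Real.sqrt_sq (norm_nonneg _), h2]
      _ ≤ Real.sqrt ((‖S.Ehat (star (xs i * S.eP) * (xs i * S.eP))‖ + 1) ^ 2 *
            ‖S.Ehat (p n * p n)‖) := Real.sqrt_le_sqrt h3
      _ = _ := by
          rw [Real.sqrt_mul (by positivity), Real.sqrt_sq hM1]
  set K3 : ℝ := ∑ i : Fin m, ‖S.ind‖ *
      ((‖S.Ehat (star (xs i * S.eP) * (xs i * S.eP))‖ + 1) * (‖S.eP‖ * ‖ys i‖)) with hK3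
  have hp_le : ∀ n, ‖p n‖ ≤ K3 * Real.sqrt ‖S.Ehat (p n * p n)‖ := by
    intro n
    have hrec := recon S xs ys h1span (p n)
    calc ‖p n‖
        = ‖∑ i : Fin m, (S.ind * S.Ehat (p n * (xs i * S.eP)) * S.eP) * ys i‖ := by
          rw [← hrec]
      _ ≤ ∑ i : Fin m, ‖(S.ind * S.Ehat (p n * (xs i * S.eP)) * S.eP) * ys i‖ :=
          norm_sum_le _ _
      _ ≤ ∑ i : Fin m, (‖S.ind‖ *
            ((‖S.Ehat (star (xs i * S.eP) * (xs i * S.eP))‖ + 1) * (‖S.eP‖ * ‖ys i‖)))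
            * Real.sqrt ‖S.Ehat (p n * p n)‖ := by
          refine Finset.sum_le_sum fun i _ => ?_
          have h4 : ‖(S.ind * S.Ehat (p n * (xs i * S.eP)) * S.eP) * ys i‖ ≤
              ‖S.ind‖ * ‖S.Ehat (p n * (xs i * S.eP))‖ * ‖S.eP‖ * ‖ys i‖ :=
            le_trans (norm_mul_le _ _)
              (mul_le_mul_of_nonneg_right (norm_mul_le₃ _ _ _) (norm_nonneg _))
          refine le_trans h4 ?_
          have h5 := hcs n i
          calc ‖S.ind‖ * ‖S.Ehat (p n * (xs i * S.eP))‖ * ‖S.eP‖ * ‖ys i‖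
              ≤ ‖S.ind‖ * ((‖S.Ehat (star (xs i * S.eP) * (xs i * S.eP))‖ + 1) *
                  Real.sqrt ‖S.Ehat (p n * p n)‖) * ‖S.eP‖ * ‖ys i‖ := by
                refine mul_le_mul_of_nonneg_right ?_ (norm_nonneg _)
                refine mul_le_mul_of_nonneg_right ?_ (norm_nonneg _)
                exact mul_le_mul_of_nonneg_left h5 (norm_nonneg _)
            _ = (‖S.ind‖ * ((‖S.Ehat (star (xs i * S.eP) * (xs i * S.eP))‖ + 1) *
                  (‖S.eP‖ * ‖ys i‖))) * Real.sqrt ‖S.Ehat (p n * p n)‖ := by ring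
      _ = K3 * Real.sqrt ‖S.Ehat (p n * p n)‖ := by rw [hK3, Finset.sum_mul]
  have htend : Filter.Tendsto (fun n => ‖p n‖) Filter.atTop (nhds 0) := by
    refine squeeze_zero (fun n => norm_nonneg _) hp_le ?_
    have h6 : Filter.Tendsto (fun n => Real.sqrt ‖S.Ehat (p n * p n)‖)
        Filter.atTop (nhds 0) := by
      have h7 := (Real.continuous_sqrt.tendsto 0).comp hN'0
      simpa [Function.comp_def, Real.sqrt_zero] using h7
    simpa using h6.const_mul K3
  have hqp : T.q p = 0 := (T.q_eq_zero_iff p hp_bdd).mpr htend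
  -- pass to the quotient
  have hg_bdd : IsBddSeq (fun n => S.ind * (b n * S.eP * b n)) :=
    ⟨_, hg_bd⟩
  have hq_g : T.q (fun n => S.ind * (b n * S.eP * b n)) =
      T.incl S.ind * (e * T.incl S.eP * e) := by
    have h7 : (fun n => S.ind * (b n * S.eP * b n)) =
        (fun _ : ℕ => S.ind) * ((b * fun _ : ℕ => S.eP) * b) := rfl
    rw [h7, T.q_mul _ _ (bdd_const _) (bdd_mul (bdd_mul hb_bdd (bdd_const _)) hb_bdd),
      T.q_mul _ _ (bdd_mul hb_bdd (bdd_const _)) hb_bdd,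
      T.q_mul _ _ hb_bdd (bdd_const _), hqb]
    rfl
  have hq8 : e - T.incl S.ind * (e * T.incl S.eP * e) = 0 := by
    have h9 : T.q (b - fun n => S.ind * (b n * S.eP * b n)) = 0 := hqp
    rw [q_sub T hb_bdd hg_bdd, hqb, hq_g] at h9
    exact h9
  have hstar_main : e * T.incl S.eP * e = T.incl S.indInv * e := by
    have h10 : e = T.incl S.ind * (e * T.incl S.eP * e) := sub_eq_zero.mp hq8
    calc e * T.incl S.eP * e
        = 1 * (e * T.incl S.eP * e) := (one_mul _).symm
      _ = T.incl (S.indInv * S.ind) * (e * T.incl S.eP * e) := by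
          rw [S.inv_mul_ind, incl_one]
      _ = T.incl S.indInv * (T.incl S.ind * (e * T.incl S.eP * e)) := by
          rw [incl_mul, mul_assoc]
      _ = T.incl S.indInv * e := by rw [← h10]
  -- conclusion
  intro z
  obtain ⟨k, xx, yy, hxx, hyy, hzz⟩ := S.span z
  rw [hzz, incl_sum, Finset.mul_sum, Finset.sum_mul,
    map_sum' S.Ehat S.Ehat_add S.Ehat_smul, incl_sum, Finset.sum_mul]
  refine Finset.sum_congr rfl fun i _ => ?_
  have hcx : e * T.incl (xx i) = T.incl (xx i) * e := (he_comm _ (hxx i)).eq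
  have hcy : e * T.incl (yy i) = T.incl (yy i) * e := (he_comm _ (hyy i)).eq
  rw [incl_mul, incl_mul, S.Ehat_eP _ (hxx i) _ (hyy i)]
  calc e * (T.incl (xx i) * T.incl S.eP * T.incl (yy i)) * e
      = (e * T.incl (xx i)) * (T.incl S.eP * T.incl (yy i) * e) := by noncomm_ring
    _ = (T.incl (xx i) * e) * (T.incl S.eP * T.incl (yy i) * e) := by rw [hcx]
    _ = T.incl (xx i) * ((e * T.incl S.eP) * (T.incl (yy i) * e)) := by noncomm_ring
    _ = T.incl (xx i) * ((e * T.incl S.eP) * (e * T.incl (yy i))) := by rw [← hcy]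
    _ = T.incl (xx i) * ((e * T.incl S.eP * e) * T.incl (yy i)) := by noncomm_ring
    _ = T.incl (xx i) * ((T.incl S.indInv * e) * T.incl (yy i)) := by rw [hstar_main]
    _ = (T.incl (xx i) * T.incl S.indInv) * (e * T.incl (yy i)) := by noncomm_ring
    _ = (T.incl (xx i) * T.incl S.indInv) * (T.incl (yy i) * e) := by rw [hcy]
    _ = ((T.incl (xx i) * T.incl S.indInv) * T.incl (yy i)) * e := by noncomm_ring
    _ = T.incl (S.indInv * (xx i * yy i)) * e := by
        rw [← incl_mul, ← incl_mul,
          show xx i * S.indInv * yy i = S.indInv * (xx i * yy i) from by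
            rw [← indInv_comm S (xx i)]; noncomm_ring]
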